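/- Let a > 0 and β < 0. Then there exists a constant C > 0 such that for every t ∈ (0,a]: ℓ_a(t)^{β−1} · ∫_0^t ℓ_a(s)^{1−β} · (1 + log(log(e·a/s))) ds ≤ C · ∫_0^t (1 + log(log(e·a/s))) ds. -/

import Mathlib

open MeasureTheory Set Real

private lemma aux_K1 {x y : ℝ} (hy : 1 ≤ y) (hxy : y ≤ x) :
    (1 + Real.log x) * y ≤ (1 + Real.log y) * x := by
  have hy0 : (0:ℝ) < y := lt_of_lt_of_le one_pos hy
  have hx0 : (0:ℝ) < x := lt_of_lt_of_le hy0 hxy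
  have h1 : Real.log x - Real.log y ≤ x / y - 1 := by
    rw [← Real.log_div (ne_of_gt hx0) (ne_of_gt hy0)]
    exact Real.log_le_sub_one_of_pos (div_pos hx0 hy0)
  have h2 : (Real.log x - Real.log y) * y ≤ x - y := by
    calc (Real.log x - Real.log y) * y ≤ (x / y - 1) * y :=
          mul_le_mul_of_nonneg_right h1 (le_of_lt hy0)
      _ = x - y := by field_simp
  nlinarith [Real.log_nonneg hy]

private lemma aux_measL (c : ℝ) : Measurable fun s : ℝ => Real.log (c / s) :=
  Real.measurable_log.comp (measurable_const.div measurable_id)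

private lemma aux_K2 {c m t : ℝ} (hm : 1 ≤ m) (ht : 0 < t)
    (hLt : 1 ≤ Real.log (c / t)) (hc : 0 < c) :
    IntegrableOn (fun s => Real.log (c / s) ^ m) (Ioo 0 t) volume ∧
    ∫ s in Ioo (0:ℝ) t, Real.log (c / s) ^ m ≤ (1 + m) ^ m * (t * Real.log (c / t) ^ m) := by
  set L : ℝ → ℝ := fun s => Real.log (c / s) with hLdef
  have hm0 : (0:ℝ) < m := lt_of_lt_of_le one_pos hm
  have hL1 : ∀ s, 0 < s → s ≤ t → 1 ≤ L s := by
    intro s hs hst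
    refine le_trans hLt ?_
    exact Real.log_le_log (div_pos hc ht) (div_le_div_of_nonneg_left (le_of_lt hc) hs hst)
  -- domination by an integrable function
  set ε : ℝ := 1 / (2 * m) with hε
  have hε0 : 0 < ε := by positivity
  set K : ℝ := (2 * m) ^ m * c ^ ((1:ℝ)/2) with hK
  have hdom : ∀ s ∈ Ioo (0:ℝ) t, L s ^ m ≤ K * s ^ (-(1/2) : ℝ) := by
    intro s hs
    have hs0 : 0 < s := hs.1
    have hcs : 0 < c / s := div_pos hc hs0
    have h1 : L s ≤ (c / s) ^ ε / ε := Real.log_le_rpow_div (le_of_lt hcs) hε0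
    have hLs0 : (0:ℝ) ≤ L s := le_trans zero_le_one (hL1 s hs0 (le_of_lt hs.2))
    have hεm : ε * m = 1/2 := by rw [hε]; field_simp
    have hεinv : ε⁻¹ = 2 * m := by rw [hε, one_div, inv_inv]
    calc L s ^ m ≤ ((c/s) ^ ε / ε) ^ m :=
          Real.rpow_le_rpow hLs0 h1 (le_of_lt hm0)
      _ = ((c/s) ^ ε) ^ m * (ε⁻¹) ^ m := by
          rw [div_eq_mul_inv, Real.mul_rpow (Real.rpow_nonneg (le_of_lt hcs) _)
            (inv_nonneg.mpr (le_of_lt hε0))]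
      _ = (c/s) ^ ((1:ℝ)/2) * (2*m) ^ m := by
          rw [← Real.rpow_mul (le_of_lt hcs), hεm, hεinv]
      _ = K * s ^ (-(1/2) : ℝ) := by
          rw [Real.div_rpow (le_of_lt hc) (le_of_lt hs0), Real.rpow_neg (le_of_lt hs0),
            hK, div_eq_mul_inv]
          ring
  have hdomInt : IntegrableOn (fun s : ℝ => K * s ^ (-(1/2) : ℝ)) (Ioo 0 t) volume := by
    have h := intervalIntegral.intervalIntegrable_rpow' (a := 0) (b := t)
      (r := -(1/2)) (by norm_num)
    have h2 : IntegrableOn (fun s : ℝ => s ^ (-(1/2) : ℝ)) (Ioc 0 t) volume :=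
      (intervalIntegrable_iff_integrableOn_Ioc_of_le (le_of_lt ht)).mp h
    exact (h2.mono_set Ioo_subset_Ioc_self).const_mul K
  have hmeasLm : Measurable fun s => L s ^ m := Measurable.pow (aux_measL c) measurable_const
  have hint : IntegrableOn (fun s => L s ^ m) (Ioo 0 t) volume := by
    refine hdomInt.mono' hmeasLm.aestronglyMeasurable ?_
    refine (ae_restrict_iff' measurableSet_Ioo).mpr (Filter.Eventually.of_forall fun s hs => ?_)
    rw [Real.norm_eq_abs, abs_of_nonneg (Real.rpow_nonneg
      (le_trans zero_le_one (hL1 s hs.1 (le_of_lt hs.2))) m)]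
    exact hdom s hs
  -- FTC bound on Ioo (t/(n+2)) t
  have key : ∀ n : ℕ, ∫ s in Ioo (t/(n+2)) t, L s ^ m ≤ t * (L t + m) ^ m := by
    intro n
    set e' : ℝ := t / (n+2) with he'
    have he0 : 0 < e' := by positivity
    have helt : e' ≤ t := by
      rw [he', div_le_iff₀ (by positivity)]
      nlinarith [ht]
    set u : ℝ → ℝ := fun x => L x + m with hu
    have hupos : ∀ x, 0 < x → x ≤ t → 0 < u x := by
      intro x hx0 hxt
      have := hL1 x hx0 hxt
      simp only [hu]
      linarith
    have hderiv : ∀ x ∈ Icc e' t, HasDerivAt (fun y => y * u y ^ m)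
        (u x ^ m - m * u x ^ (m-1)) x := by
      intro x hx
      have hx0 : 0 < x := lt_of_lt_of_le he0 hx.1
      have hux : 0 < u x := hupos x hx0 hx.2
      have hlog : HasDerivAt (fun y => Real.log c - Real.log y + m) (-x⁻¹) x := by
        simpa using ((Real.hasDerivAt_log (ne_of_gt hx0)).const_sub (Real.log c)).add_const m
      have hu' : HasDerivAt u (-x⁻¹) x := by
        refine hlog.congr_of_eventuallyEq ?_
        filter_upwards [eventually_gt_nhds hx0] with y hy
        simp only [hu, hLdef]
        rw [Real.log_div (ne_of_gt hc) (ne_of_gt hy)]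
      have hrp : HasDerivAt (fun y => u y ^ m) (-x⁻¹ * m * u x ^ (m-1)) x :=
        hu'.rpow_const (Or.inl (ne_of_gt hux))
      have hmul : HasDerivAt (fun y => y * u y ^ m)
          (1 * u x ^ m + x * (-x⁻¹ * m * u x ^ (m-1))) x := (hasDerivAt_id' x).mul hrp
      convert hmul using 1
      have hxx : x * x⁻¹ = 1 := mul_inv_cancel₀ (ne_of_gt hx0)
      linear_combination m * u x ^ (m-1) * hxx
    have hcontL : ContinuousOn L (Icc e' t) := by
      apply ContinuousOn.log
      · exact continuousOn_const.div continuousOn_id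
          (fun x hx => ne_of_gt (lt_of_lt_of_le he0 hx.1))
      · intro x hx
        exact ne_of_gt (div_pos hc (lt_of_lt_of_le he0 hx.1))
    have hcontu : ContinuousOn u (Icc e' t) := hcontL.add continuousOn_const
    have hcontLm : ContinuousOn (fun s => L s ^ m) (Icc e' t) :=
      hcontL.rpow_const (fun x _ => Or.inr (le_of_lt hm0))
    have hcontD : ContinuousOn (fun x => u x ^ m - m * u x ^ (m-1)) (Icc e' t) :=
      (hcontu.rpow_const fun x _ => Or.inr (le_of_lt hm0)).sub
        (continuousOn_const.mul (hcontu.rpow_const fun x _ => Or.inr (by linarith)))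
    have hii1 : IntervalIntegrable (fun s => L s ^ m) volume e' t :=
      hcontLm.intervalIntegrable_of_Icc helt
    have hii2 : IntervalIntegrable (fun x => u x ^ m - m * u x ^ (m-1)) volume e' t :=
      hcontD.intervalIntegrable_of_Icc helt
    have hFTC : ∫ s in e'..t, (u s ^ m - m * u s ^ (m-1))
        = t * u t ^ m - e' * u e' ^ m :=
      intervalIntegral.integral_eq_sub_of_hasDerivAt
        (fun x hx => hderiv x (by rwa [uIcc_of_le helt] at hx)) hii2
    have hpt : ∀ x ∈ Icc e' t, L x ^ m ≤ u x ^ m - m * u x ^ (m-1) := by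
      intro x hx
      have hx0 : 0 < x := lt_of_lt_of_le he0 hx.1
      have h1 : 1 ≤ L x := hL1 x hx0 hx.2
      have hL0 : (0:ℝ) < L x := lt_of_lt_of_le one_pos h1
      have hux : 0 < u x := hupos x hx0 hx.2
      have e1 := Real.rpow_add hux (m-1) 1
      rw [sub_add_cancel, Real.rpow_one] at e1
      have e2 := Real.rpow_add hL0 (m-1) 1
      rw [sub_add_cancel, Real.rpow_one] at e2
      have h3 : L x ^ (m-1) ≤ u x ^ (m-1) :=
        Real.rpow_le_rpow (le_of_lt hL0) (by simp only [hu]; linarith) (by linarith)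
      have h4 : L x ^ (m-1) * L x ≤ u x ^ (m-1) * L x :=
        mul_le_mul_of_nonneg_right h3 (le_of_lt hL0)
      rw [e1, e2]
      have h5 : u x ^ (m-1) * L x = u x ^ (m-1) * u x - m * u x ^ (m-1) := by
        simp only [hu]; ring
      linarith [h4, h5.le, h5.ge]
    have hmono := intervalIntegral.integral_mono_on helt hii1 hii2 hpt
    rw [hFTC] at hmono
    have hIoo : ∫ s in Ioo e' t, L s ^ m = ∫ s in e'..t, L s ^ m := by
      rw [intervalIntegral.integral_of_le helt, ← integral_Ioc_eq_integral_Ioo]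
    rw [hIoo]
    have hnn : 0 ≤ e' * u e' ^ m :=
      mul_nonneg (le_of_lt he0) (Real.rpow_nonneg (le_of_lt (hupos e' he0 helt)) m)
    calc ∫ s in e'..t, L s ^ m ≤ t * u t ^ m - e' * u e' ^ m := hmono
      _ ≤ t * u t ^ m := by linarith
      _ = t * (L t + m) ^ m := rfl
  -- pass to the limit
  have hun : (⋃ n : ℕ, Ioo (t/(n+2)) t) = Ioo (0:ℝ) t := by
    ext x
    simp only [mem_iUnion, mem_Ioo]
    constructor
    · rintro ⟨n, h1, h2⟩
      exact ⟨lt_trans (by positivity) h1, h2⟩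
    · rintro ⟨hx0, hxt⟩
      obtain ⟨n, hn⟩ := exists_nat_gt (t / x)
      refine ⟨n, ?_, hxt⟩
      rw [div_lt_iff₀ (by positivity)]
      have h1 : t / x < (n:ℝ) + 2 := by linarith
      calc t = (t/x) * x := by field_simp
        _ < ((n:ℝ)+2) * x := mul_lt_mul_of_pos_right h1 hx0
        _ = x * ((n:ℝ)+2) := by ring
  have hmonoS : Monotone fun n : ℕ => Ioo (t/((n:ℝ)+2)) t := by
    intro i j hij
    apply Ioo_subset_Ioo_left
    apply div_le_div_of_nonneg_left (le_of_lt ht) (by positivity)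
    exact_mod_cast Nat.add_le_add_right hij 2
  have htend := tendsto_setIntegral_of_monotone (fun n : ℕ => measurableSet_Ioo)
    hmonoS (hun ▸ hint)
  rw [hun] at htend
  have hle : ∫ s in Ioo (0:ℝ) t, L s ^ m ≤ t * (L t + m) ^ m :=
    le_of_tendsto htend (Filter.Eventually.of_forall fun n => key n)
  refine ⟨hint, le_trans hle ?_⟩
  have h1 : L t + m ≤ (1+m) * L t := by nlinarith [hLt]
  have h2 : (L t + m) ^ m ≤ ((1+m) * L t) ^ m :=
    Real.rpow_le_rpow (by linarith) h1 (le_of_lt hm0)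
  have h3 : ((1+m) * L t) ^ m = (1+m)^m * L t ^ m :=
    Real.mul_rpow (by linarith) (by linarith)
  calc t * (L t + m) ^ m ≤ t * ((1+m)^m * L t ^ m) := by
        rw [← h3]; exact mul_le_mul_of_nonneg_left h2 (le_of_lt ht)
    _ = (1+m)^m * (t * L t ^ m) := by ring


theorem stmt_17 (a β : ℝ) (ha : 0 < a) (hβ : β < 0) :
    ∃ C : ℝ, 0 < C ∧ ∀ t ∈ Ioc (0 : ℝ) a,
      Real.log (Real.exp 1 * a / t) ^ (β - 1) *
          (∫ s in Ioo (0 : ℝ) t, Real.log (Real.exp 1 * a / s) ^ (1 - β) *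
            (1 + Real.log (Real.log (Real.exp 1 * a / s)))) ≤
        C * ∫ s in Ioo (0 : ℝ) t, (1 + Real.log (Real.log (Real.exp 1 * a / s))) := by
  set c : ℝ := Real.exp 1 * a with hcdef
  have hc : 0 < c := mul_pos (Real.exp_pos 1) ha
  set m : ℝ := 2 - β with hmdef
  have hm : (1:ℝ) ≤ m := by rw [hmdef]; linarith
  have hm0 : (0:ℝ) < m := lt_of_lt_of_le one_pos hm
  refine ⟨(1+m)^m, Real.rpow_pos_of_pos (by linarith) m, ?_⟩
  rintro t ⟨ht0, hta⟩
  have hLt : 1 ≤ Real.log (c / t) := by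
    rw [Real.le_log_iff_exp_le (div_pos hc ht0), le_div_iff₀ ht0, hcdef]
    exact mul_le_mul_of_nonneg_left hta (le_of_lt (Real.exp_pos 1))
  have hLtpos : 0 < Real.log (c / t) := lt_of_lt_of_le one_pos hLt
  obtain ⟨hint, hK2⟩ := aux_K2 hm ht0 hLt hc
  set L : ℝ → ℝ := fun s => Real.log (c / s) with hLdef
  set b : ℝ → ℝ := fun s => 1 + Real.log (Real.log (c / s)) with hbdef
  have hL1 : ∀ s, 0 < s → s ≤ t → 1 ≤ L s := fun s hs hst =>
    le_trans hLt (Real.log_le_log (div_pos hc ht0)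
      (div_le_div_of_nonneg_left (le_of_lt hc) hs hst))
  have hLmono : ∀ s, 0 < s → s ≤ t → L t ≤ L s := fun s hs hst =>
    Real.log_le_log (div_pos hc ht0)
      (div_le_div_of_nonneg_left (le_of_lt hc) hs hst)
  set Lt : ℝ := Real.log (c / t) with hLtdef
  set bt : ℝ := 1 + Real.log Lt with hbtdef
  have hbt1 : (1:ℝ) ≤ bt := by
    rw [hbtdef]
    linarith [Real.log_nonneg hLt]
  -- b s ≤ L s whenever 1 ≤ L s
  have hbL : ∀ s, 0 < s → s ≤ t → b s ≤ L s := by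
    intro s hs hst
    have h1 := hL1 s hs hst
    have := Real.log_le_sub_one_of_pos (lt_of_lt_of_le one_pos h1)
    simp only [hbdef, hLdef] at *
    linarith
  have hb1 : ∀ s, 0 < s → s ≤ t → 1 ≤ b s := by
    intro s hs hst
    have := Real.log_nonneg (hL1 s hs hst)
    simp only [hbdef, hLdef] at *
    linarith
  -- L s ^ m = L s ^ (1-β) * L s
  have hsplit : ∀ s, 0 < s → s ≤ t → L s ^ m = L s ^ (1-β) * L s := by
    intro s hs hst
    have hLs0 : 0 < L s := lt_of_lt_of_le one_pos (hL1 s hs hst)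
    have e := Real.rpow_add hLs0 (1-β) 1
    rw [Real.rpow_one] at e
    rw [show m = 1 - β + 1 by rw [hmdef]; ring]
    exact e
  -- integrability of the two integrands
  have hmeasb : Measurable b := by
    exact measurable_const.add (Real.measurable_log.comp (aux_measL c))
  have hmeasf : Measurable fun s => L s ^ (1-β) * b s :=
    (Measurable.pow (aux_measL c) measurable_const).mul hmeasb
  have hint_f : IntegrableOn (fun s => L s ^ (1-β) * b s) (Ioo 0 t) volume := by
    refine hint.mono' hmeasf.aestronglyMeasurable ?_
    refine (ae_restrict_iff' measurableSet_Ioo).mpr (Filter.Eventually.of_forall fun s hs => ?_)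
    have hLs1 := hL1 s hs.1 (le_of_lt hs.2)
    have hLs0 : 0 < L s := lt_of_lt_of_le one_pos hLs1
    have hb0 : 0 ≤ b s := le_trans zero_le_one (hb1 s hs.1 (le_of_lt hs.2))
    rw [Real.norm_eq_abs, abs_of_nonneg (mul_nonneg (Real.rpow_nonneg (le_of_lt hLs0) _) hb0)]
    rw [hsplit s hs.1 (le_of_lt hs.2)]
    exact mul_le_mul_of_nonneg_left (hbL s hs.1 (le_of_lt hs.2))
      (Real.rpow_nonneg (le_of_lt hLs0) _)
  have hint_b : IntegrableOn b (Ioo 0 t) volume := by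
    refine hint.mono' hmeasb.aestronglyMeasurable ?_
    refine (ae_restrict_iff' measurableSet_Ioo).mpr (Filter.Eventually.of_forall fun s hs => ?_)
    have hLs1 := hL1 s hs.1 (le_of_lt hs.2)
    have hb0 : 0 ≤ b s := le_trans zero_le_one (hb1 s hs.1 (le_of_lt hs.2))
    rw [Real.norm_eq_abs, abs_of_nonneg hb0]
    calc b s ≤ L s := hbL s hs.1 (le_of_lt hs.2)
      _ = L s ^ (1:ℝ) := (Real.rpow_one _).symm
      _ ≤ L s ^ m := Real.rpow_le_rpow_of_exponent_le hLs1 hm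
  -- pointwise comparison
  have h_pt : ∀ s ∈ Ioo (0:ℝ) t, L s ^ (1-β) * b s ≤ (bt / Lt) * L s ^ m := by
    intro s hs
    have hLs1 := hL1 s hs.1 (le_of_lt hs.2)
    have hLs0 : 0 < L s := lt_of_lt_of_le one_pos hLs1
    have hk := aux_K1 hLt (hLmono s hs.1 (le_of_lt hs.2))
    -- hk : (1 + log (L s)) * Lt ≤ (1 + log Lt) * L s, i.e. b s * Lt ≤ bt * L s
    have hbs : b s ≤ bt / Lt * L s := by
      rw [div_mul_eq_mul_div, le_div_iff₀ hLtpos]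
      calc b s * Lt = (1 + Real.log (L s)) * Lt := by rw [hbdef, hLdef]
        _ ≤ (1 + Real.log Lt) * L s := hk
        _ = bt * L s := by rw [hbtdef]
    calc L s ^ (1-β) * b s ≤ L s ^ (1-β) * (bt / Lt * L s) :=
          mul_le_mul_of_nonneg_left hbs (Real.rpow_nonneg (le_of_lt hLs0) _)
      _ = (bt / Lt) * (L s ^ (1-β) * L s) := by ring
      _ = (bt / Lt) * L s ^ m := by rw [← hsplit s hs.1 (le_of_lt hs.2)]
  have h3 : (∫ s in Ioo (0:ℝ) t, L s ^ (1-β) * b s)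
      ≤ (bt / Lt) * ∫ s in Ioo (0:ℝ) t, L s ^ m := by
    rw [← MeasureTheory.integral_const_mul]
    exact setIntegral_mono_on hint_f (hint.const_mul _) measurableSet_Ioo h_pt
  -- lower bound on the b-integral
  have h5 : t * bt ≤ ∫ s in Ioo (0:ℝ) t, b s := by
    have hconst : IntegrableOn (fun _ : ℝ => bt) (Ioo 0 t) volume := by
      apply (integrableOn_const_iff (C := bt)).mpr
      right
      rw [Real.volume_Ioo]
      exact ENNReal.ofReal_lt_top
    have hmono := setIntegral_mono_on hconst hint_b measurableSet_Ioo (fun s hs => by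
      have h1 : Real.log Lt ≤ Real.log (L s) :=
        Real.log_le_log hLtpos (hLmono s hs.1 (le_of_lt hs.2))
      simp only [hbdef, hbtdef, hLdef] at *
      linarith)
    rw [setIntegral_const, measureReal_def, Real.volume_Ioo, smul_eq_mul] at hmono
    rw [ENNReal.toReal_ofReal (by linarith)] at hmono
    calc t * bt = (t - 0) * bt := by ring
      _ ≤ ∫ s in Ioo (0:ℝ) t, b s := hmono
  -- assemble
  have hbtLt : 0 ≤ bt / Lt := div_nonneg (by linarith) (le_of_lt hLtpos)
  have hI1 : (∫ s in Ioo (0:ℝ) t, L s ^ (1-β) * b s)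
      ≤ (bt / Lt) * ((1+m)^m * (t * Lt ^ m)) :=
    le_trans h3 (mul_le_mul_of_nonneg_left hK2 hbtLt)
  have hfinal : Lt ^ (β-1) * (∫ s in Ioo (0:ℝ) t, L s ^ (1-β) * b s)
      ≤ Lt ^ (β-1) * ((bt / Lt) * ((1+m)^m * (t * Lt ^ m))) :=
    mul_le_mul_of_nonneg_left hI1 (Real.rpow_nonneg (le_of_lt hLtpos) _)
  have h7 : Lt ^ (β-1) * Lt ^ m = Lt := by
    rw [← Real.rpow_add hLtpos, show β - 1 + m = 1 by rw [hmdef]; ring, Real.rpow_one]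
  have hsim : Lt ^ (β-1) * ((bt / Lt) * ((1+m)^m * (t * Lt ^ m))) = (1+m)^m * (t * bt) := by
    have hne : Lt ≠ 0 := ne_of_gt hLtpos
    calc Lt ^ (β-1) * ((bt / Lt) * ((1+m)^m * (t * Lt ^ m)))
        = (Lt ^ (β-1) * Lt ^ m) * ((1+m)^m * (t * bt)) / Lt := by ring
      _ = Lt * ((1+m)^m * (t * bt)) / Lt := by rw [h7]
      _ = (1+m)^m * (t * bt) := by field_simp
  calc Lt ^ (β-1) * (∫ s in Ioo (0:ℝ) t, L s ^ (1-β) * b s)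
      ≤ (1+m)^m * (t * bt) := by rw [← hsim]; exact hfinal
    _ ≤ (1+m)^m * ∫ s in Ioo (0:ℝ) t, b s :=
        mul_le_mul_of_nonneg_left h5 (le_of_lt (Real.rpow_pos_of_pos (by linarith) m))
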